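/- Let X be an almost square Banach space. Then the 2-fold projective symmetric tensor product ⊗̂_{π,s,2} X is almost square. -/
import Mathlib


open Filter Topology Metric

/-- A Banach space is almost square (ASQ). -/
def ASQ (X : Type*) [NormedAddCommGroup X] [NormedSpace ℝ X] : Prop :=
  ∀ (k : ℕ) (x : Fin k → X), (∀ i, ‖x i‖ = 1) →
    ∃ y : ℕ → X, (∀ n, ‖y n‖ ≤ 1) ∧ Tendsto (fun n => ‖y n‖) atTop (𝓝 1) ∧
      ∀ i, Tendsto (fun n => ‖x i + y n‖) atTop (𝓝 1) ∧
        Tendsto (fun n => ‖x i - y n‖) atTop (𝓝 1)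

/-- Auxiliary sets used to build a filter of "almost square directions" in `X`. -/
def YSet {X : Type*} [NormedAddCommGroup X] (p : ℕ × Finset X) : Set X :=
  {y | ‖y‖ ≤ 1 ∧ 1 - 1/((p.1 : ℝ)+1) ≤ ‖y‖ ∧ ∀ x ∈ p.2, ‖x‖ = 1 →
    ‖x + y‖ ≤ 1 + 1/((p.1 : ℝ)+1) ∧ ‖x - y‖ ≤ 1 + 1/((p.1 : ℝ)+1)}

/-- If `X` is an ASQ Banach space then the 2-fold projective symmetric tensor product
`⊗̂_{π,s,2} X` is ASQ. The space `⊗̂_{π,s,2} X` is here a Banach space `Z` together with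
the square map `σ : x ↦ x ⊗ x`, satisfying `‖σ x‖ = ‖x‖²`, homogeneity of degree 2,
the addition formula `σ(x+y) + σ(x−y) = 2(σ x + σ y)`, and whose closed unit ball is the
closed convex hull of the squares of unit vectors. -/
theorem stmt4 {X Z : Type*} [NormedAddCommGroup X] [NormedSpace ℝ X] [CompleteSpace X]
    [NormedAddCommGroup Z] [NormedSpace ℝ Z] [CompleteSpace Z]
    (σ : X → Z)
    (hnorm : ∀ x, ‖σ x‖ = ‖x‖ ^ 2)
    (hsmul : ∀ (c : ℝ) (x : X), σ (c • x) = (c ^ 2) • σ x)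
    (haddition : ∀ x y : X, σ (x + y) + σ (x - y) = (2 : ℝ) • (σ x + σ y))
    (hball : closure (convexHull ℝ {z : Z | ∃ x : X, ‖x‖ = 1 ∧ z = σ x}) =
      closedBall (0 : Z) 1)
    (hX : ASQ X) : ASQ Z := by
  classical
  set S : Set Z := {z : Z | ∃ x : X, ‖x‖ = 1 ∧ z = σ x} with hSdef
  -- Key norm estimate
  have hkey : ∀ x y : X, ‖σ x + σ y‖ ≤ (‖x + y‖ ^ 2 + ‖x - y‖ ^ 2) / 2 := by
    intro x y
    have h := haddition x y
    have h2 : σ x + σ y = (2⁻¹ : ℝ) • (σ (x + y) + σ (x - y)) := by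
      rw [h, smul_smul]; norm_num
    have habs : ‖(2⁻¹ : ℝ)‖ = 2⁻¹ := by norm_num
    have htri := norm_add_le (σ (x + y)) (σ (x - y))
    rw [hnorm, hnorm] at htri
    calc ‖σ x + σ y‖ = ‖(2⁻¹ : ℝ)‖ * ‖σ (x + y) + σ (x - y)‖ := by rw [h2, norm_smul]
      _ ≤ 2⁻¹ * (‖x + y‖ ^ 2 + ‖x - y‖ ^ 2) := by
          rw [habs]; nlinarith [norm_nonneg (σ (x + y) + σ (x - y))]
      _ = (‖x + y‖ ^ 2 + ‖x - y‖ ^ 2) / 2 := by ring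
  -- Each YSet is nonempty, by ASQ of X
  have hYne : ∀ p : ℕ × Finset X, (YSet p).Nonempty := by
    rintro ⟨m, A⟩
    have hη : (0:ℝ) < 1/((m:ℝ)+1) := by positivity
    set A' : Finset X := A.filter (fun x => ‖x‖ = 1) with hA'
    have hx1 : ∀ i : Fin A'.card, ‖(A'.equivFin.symm i : X)‖ = 1 := by
      intro i
      exact (Finset.mem_filter.mp (A'.equivFin.symm i).2).2
    obtain ⟨y, hy1, hy2, hy3⟩ := hX A'.card (fun i => (A'.equivFin.symm i : X)) hx1
    have e1 : ∀ᶠ n in atTop, 1 - 1/((m:ℝ)+1) < ‖y n‖ :=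
      hy2.eventually (eventually_gt_nhds (by linarith))
    have e2 : ∀ᶠ n in atTop, ∀ i : Fin A'.card,
        ‖(A'.equivFin.symm i : X) + y n‖ < 1 + 1/((m:ℝ)+1) ∧
        ‖(A'.equivFin.symm i : X) - y n‖ < 1 + 1/((m:ℝ)+1) := by
      rw [eventually_all]
      intro i
      exact ((hy3 i).1.eventually (eventually_lt_nhds (by linarith))).and
        ((hy3 i).2.eventually (eventually_lt_nhds (by linarith)))
    obtain ⟨n, hn1, hn2⟩ := (e1.and e2).exists
    refine ⟨y n, hy1 n, le_of_lt hn1, ?_⟩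
    intro x hxA hxn
    have hxA' : x ∈ A' := Finset.mem_filter.mpr ⟨hxA, hxn⟩
    have h := hn2 (A'.equivFin ⟨x, hxA'⟩)
    simp only [Equiv.symm_apply_apply] at h
    exact ⟨le_of_lt h.1, le_of_lt h.2⟩
  -- Monotonicity and directedness
  have hmono : ∀ (m m' : ℕ) (A A' : Finset X), m ≤ m' → A ⊆ A' →
      YSet (m', A') ⊆ YSet (m, A) := by
    intro m m' A A' hm hA y hy
    obtain ⟨h1, h2, h3⟩ := hy
    have hcast : (m:ℝ) + 1 ≤ (m':ℝ) + 1 := by exact_mod_cast Nat.add_le_add_right hm 1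
    have hle : 1/((m':ℝ)+1) ≤ 1/((m:ℝ)+1) :=
      one_div_le_one_div_of_le (by positivity) hcast
    refine ⟨h1, by linarith, ?_⟩
    intro x hx hxn
    obtain ⟨g1, g2⟩ := h3 x (hA hx) hxn
    exact ⟨by linarith, by linarith⟩
  have hdir : Directed (· ≥ ·) (fun p : ℕ × Finset X => 𝓟 (YSet p)) := by
    rintro ⟨m, A⟩ ⟨m', A'⟩
    refine ⟨(max m m', A ∪ A'), ?_, ?_⟩
    · exact principal_mono.mpr (hmono m (max m m') A (A ∪ A') (le_max_left _ _)
        Finset.subset_union_left)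
    · exact principal_mono.mpr (hmono m' (max m m') A' (A ∪ A') (le_max_right _ _)
        Finset.subset_union_right)
  set F : Filter X := ⨅ p : ℕ × Finset X, 𝓟 (YSet p) with hFdef
  have hFne : F.NeBot :=
    iInf_neBot_of_directed hdir (fun p => principal_neBot_iff.mpr (hYne p))
  have hmem : ∀ p : ℕ × Finset X, YSet p ∈ F := fun p =>
    mem_iInf_of_mem p (mem_principal_self _)
  -- eventual norm bounds on y
  have hnorm1 : ∀ δ : ℝ, 0 < δ → ∀ᶠ y in F, ‖y‖ ≤ 1 ∧ 1 - δ ≤ ‖y‖ := by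
    intro δ hδ
    obtain ⟨m, hm⟩ := exists_nat_one_div_lt hδ
    refine eventually_iff_exists_mem.mpr ⟨YSet (m, ∅), hmem (m, ∅), ?_⟩
    intro y hy
    exact ⟨hy.1, by linarith [hy.2.1]⟩
  -- eventual bound for squares of unit vectors
  have hbase : ∀ δ : ℝ, 0 < δ → ∀ x : X, ‖x‖ = 1 → ∀ᶠ y in F, ‖σ x + σ y‖ ≤ 1 + δ := by
    intro δ hδ x hx
    obtain ⟨m, hm⟩ := exists_nat_one_div_lt (show (0:ℝ) < δ/3 by linarith)
    refine eventually_iff_exists_mem.mpr ⟨YSet (m, {x}), hmem (m, {x}), ?_⟩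
    intro y hy
    obtain ⟨h1, h2, h3⟩ := hy
    obtain ⟨g1, g2⟩ := h3 x (Finset.mem_singleton_self x) hx
    have hk := hkey x y
    have hη0 : (0:ℝ) < 1/((m:ℝ)+1) := by positivity
    have hη1 : 1/((m:ℝ)+1) ≤ 1 := by
      rw [div_le_one (by positivity)]
      linarith [Nat.cast_nonneg (α := ℝ) m]
    have b1 : ‖x + y‖ ^ 2 ≤ (1 + 1/((m:ℝ)+1)) ^ 2 := by nlinarith [norm_nonneg (x + y)]
    have b2 : ‖x - y‖ ^ 2 ≤ (1 + 1/((m:ℝ)+1)) ^ 2 := by nlinarith [norm_nonneg (x - y)]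
    nlinarith
  -- eventual bound for convex combinations
  have hconv : ∀ δ : ℝ, 0 < δ → ∀ u ∈ convexHull ℝ S, ∀ᶠ y in F, ‖u + σ y‖ ≤ 1 + δ := by
    intro δ hδ
    have hsub : convexHull ℝ S ⊆ {z : Z | ∀ᶠ y in F, ‖z + σ y‖ ≤ 1 + δ} := by
      apply convexHull_min
      · rintro w ⟨x, hx, rfl⟩
        exact hbase δ hδ x hx
      · intro z₁ h₁ z₂ h₂ a b ha hb hab
        filter_upwards [h₁, h₂] with y g₁ g₂
        have key : a • z₁ + b • z₂ + (a + b) • σ y = a • (z₁ + σ y) + b • (z₂ + σ y) := by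
          module
        have heq : a • z₁ + b • z₂ + σ y = a • (z₁ + σ y) + b • (z₂ + σ y) := by
          rw [← key, hab, one_smul]
        show ‖a • z₁ + b • z₂ + σ y‖ ≤ 1 + δ
        rw [heq]
        calc ‖a • (z₁ + σ y) + b • (z₂ + σ y)‖
            ≤ ‖a • (z₁ + σ y)‖ + ‖b • (z₂ + σ y)‖ := norm_add_le _ _
          _ = a * ‖z₁ + σ y‖ + b * ‖z₂ + σ y‖ := by
              rw [norm_smul, norm_smul, Real.norm_eq_abs, Real.norm_eq_abs,
                abs_of_nonneg ha, abs_of_nonneg hb]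
          _ ≤ 1 + δ := by nlinarith
    intro u hu
    exact hsub hu
  -- now prove ASQ Z
  intro k z hz
  have main : ∀ ε : ℝ, 0 < ε → ∃ w : Z, ‖w‖ ≤ 1 ∧ 1 - ε ≤ ‖w‖ ∧
      ∀ i, |‖z i + w‖ - 1| ≤ ε ∧ |‖z i - w‖ - 1| ≤ ε := by
    intro ε hε
    set δ : ℝ := min ε 1 / 8 with hδdef
    have hδ : 0 < δ := by
      have : 0 < min ε 1 := lt_min hε one_pos
      positivity
    have hδε : δ ≤ ε / 8 := by
      have := min_le_left ε 1
      rw [hδdef]; linarith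
    have hδ1 : δ ≤ 1 / 8 := by
      have := min_le_right ε 1
      rw [hδdef]; linarith
    have happrox : ∀ v : Z, ‖v‖ = 1 → ∃ u ∈ convexHull ℝ S, ‖v - u‖ < δ := by
      intro v hv
      have hvmem : v ∈ closure (convexHull ℝ S) := by
        rw [hball]
        exact mem_closedBall_zero_iff.mpr hv.le
      rcases Metric.mem_closure_iff.mp hvmem δ hδ with ⟨u, hu, hd⟩
      exact ⟨u, hu, by rwa [dist_eq_norm] at hd⟩
    choose u hu hud using fun i : Fin k => happrox (z i) (hz i)
    choose u' hu' hud' using fun i : Fin k =>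
      happrox (-(z i)) (by rw [norm_neg]; exact hz i)
    have hev : ∀ᶠ y in F, (‖y‖ ≤ 1 ∧ 1 - δ ≤ ‖y‖) ∧
        ∀ i : Fin k, ‖u i + σ y‖ ≤ 1 + δ ∧ ‖u' i + σ y‖ ≤ 1 + δ :=
      (hnorm1 δ hδ).and (eventually_all.mpr fun i =>
        ((hconv δ hδ _ (hu i)).and (hconv δ hδ _ (hu' i))))
    obtain ⟨y, ⟨hy1, hy2⟩, hy3⟩ := hev.exists
    have hwn : ‖σ y‖ = ‖y‖ ^ 2 := hnorm y
    have hwle : ‖σ y‖ ≤ 1 := by rw [hwn]; nlinarith [norm_nonneg y]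
    have hwlow : 1 - 2 * δ ≤ ‖σ y‖ := by rw [hwn]; nlinarith [norm_nonneg y]
    refine ⟨σ y, hwle, by linarith, ?_⟩
    intro i
    have hzu : z i + σ y = (z i - u i) + (u i + σ y) := by abel
    have up1 : ‖z i + σ y‖ ≤ 1 + 2 * δ := by
      rw [hzu]
      have := norm_add_le (z i - u i) (u i + σ y)
      linarith [hud i, (hy3 i).1]
    have hzu' : z i - σ y = -((-(z i) - u' i) + (u' i + σ y)) := by abel
    have up2 : ‖z i - σ y‖ ≤ 1 + 2 * δ := by
      rw [hzu', norm_neg]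
      have := norm_add_le (-(z i) - u' i) (u' i + σ y)
      linarith [hud' i, (hy3 i).2]
    have h1 : (z i + σ y) - (z i - σ y) = σ y + σ y := by abel
    have h2 : ‖σ y + σ y‖ = 2 * ‖σ y‖ := by
      rw [← two_smul ℝ, norm_smul]; simp
    have h3 := norm_sub_le (z i + σ y) (z i - σ y)
    rw [h1, h2] at h3
    constructor
    · rw [abs_le]; constructor <;> linarith
    · rw [abs_le]; constructor <;> linarith
  choose w hw1 hw2 hw3 using fun m : ℕ => main (1/((m:ℝ)+1)) (by positivity)
  have hlim : Tendsto (fun n : ℕ => 1/((n:ℝ)+1)) atTop (𝓝 0) :=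
    tendsto_one_div_add_atTop_nhds_zero_nat
  have hlo : Tendsto (fun n : ℕ => 1 - 1/((n:ℝ)+1)) atTop (𝓝 1) := by
    have := tendsto_const_nhds (x := (1:ℝ)) (f := atTop (α := ℕ))
    simpa using this.sub hlim
  have hhi : Tendsto (fun n : ℕ => 1 + 1/((n:ℝ)+1)) atTop (𝓝 1) := by
    have := tendsto_const_nhds (x := (1:ℝ)) (f := atTop (α := ℕ))
    simpa using this.add hlim
  refine ⟨w, hw1, ?_, ?_⟩
  · exact tendsto_of_tendsto_of_tendsto_of_le_of_le hlo tendsto_const_nhds hw2 hw1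
  · intro i
    constructor
    · refine tendsto_of_tendsto_of_tendsto_of_le_of_le hlo hhi ?_ ?_
      · intro n; have := abs_le.mp (hw3 n i).1; linarith [this.1]
      · intro n; have := abs_le.mp (hw3 n i).1; linarith [this.2]
    · refine tendsto_of_tendsto_of_tendsto_of_le_of_le hlo hhi ?_ ?_
      · intro n; have := abs_le.mp (hw3 n i).2; linarith [this.1]
      · intro n; have := abs_le.mp (hw3 n i).2; linarith [this.2]
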